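/- Let L and J be positive integers, and let x₁, …, x_J be real numbers such that ‖x_j‖ ≥ 1/L for every j = 1, …, J. Then ∑_{l=1}^{L} | ∑_{j=1}^{J} e(l·x_j) | > J/6. -/

import Mathlib

open Finset

/-- e(x) = e^{2πix}. -/
noncomputable def e (x : ℝ) : ℂ := Complex.exp (2 * Real.pi * Complex.I * x)

/-- ‖x‖ : the distance from `x` to the nearest integer. -/
noncomputable def distNearestInt (x : ℝ) : ℝ := |x - round x|

namespace Stmt8Aux

lemma e_eq (x : ℝ) : e x = Complex.exp ((2 * Real.pi * x : ℝ) * Complex.I) := by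
  unfold e; congr 1; push_cast; ring

lemma e_add (s t : ℝ) : e (s + t) = e s * e t := by
  rw [e_eq, e_eq, e_eq, ← Complex.exp_add]; congr 1; push_cast; ring

lemma e_zero : e 0 = 1 := by
  rw [e_eq]; norm_num

lemma e_conj (t : ℝ) : (starRingEnd ℂ) (e t) = e (-t) := by
  rw [e_eq, e_eq, ← Complex.exp_conj]
  congr 1
  rw [map_mul, Complex.conj_I, Complex.conj_ofReal]
  push_cast
  ring

lemma e_re (t : ℝ) : (e t).re = Real.cos (2 * Real.pi * t) := by
  rw [e_eq, Complex.exp_ofReal_mul_I_re]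

lemma e_pow (t : ℝ) (k : ℕ) : e t ^ k = e (k * t) := by
  rw [e_eq, e_eq, ← Complex.exp_nat_mul]; congr 1; push_cast; ring

lemma e_mul_conj (t : ℝ) : e t * (starRingEnd ℂ) (e t) = 1 := by
  rw [e_conj, ← e_add]; simp [e_zero]

lemma e_add_conj (t : ℝ) :
    e t + (starRingEnd ℂ) (e t) = ((2 * Real.cos (2 * Real.pi * t) : ℝ) : ℂ) := by
  rw [Complex.add_conj, e_re]

/-- The key telescoping identity. -/
lemma key_ident (ϑ : ℝ) (z : ℂ) (n : ℕ) :
    (2 * (Real.cos ϑ : ℂ) * z - z ^ 2 - 1) *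
      ∑ k ∈ range n, (Real.sin (((k : ℝ) + 1) * ϑ) : ℂ) * z ^ k
    = -(Real.sin ϑ : ℂ) + (Real.sin (((n : ℝ) + 1) * ϑ) : ℂ) * z ^ n
        - (Real.sin ((n : ℝ) * ϑ) : ℂ) * z ^ (n + 1) := by
  induction n with
  | zero => simp
  | succ n ih =>
    rw [sum_range_succ, mul_add, ih]
    have hrec : Real.sin (((n : ℝ) + 1 + 1) * ϑ)
        = 2 * Real.cos ϑ * Real.sin (((n : ℝ) + 1) * ϑ) - Real.sin ((n : ℝ) * ϑ) := by
      have h1 : ((n : ℝ) + 1 + 1) * ϑ = ((n : ℝ) + 1) * ϑ + ϑ := by ring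
      have h2 : (n : ℝ) * ϑ = ((n : ℝ) + 1) * ϑ - ϑ := by ring
      rw [h1, h2, Real.sin_add, Real.sin_sub]; ring
    have hrecC : (Real.sin (((n : ℝ) + 1 + 1) * ϑ) : ℂ)
        = 2 * (Real.cos ϑ : ℂ) * (Real.sin (((n : ℝ) + 1) * ϑ) : ℂ)
          - (Real.sin ((n : ℝ) * ϑ) : ℂ) := by
      exact_mod_cast congrArg (fun r : ℝ => (r : ℂ)) hrec
    push_cast
    push_cast at hrecC
    linear_combination (-(z ^ (n + 1))) * hrecC

end Stmt8Aux

set_option maxHeartbeats 8000000 in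
open Stmt8Aux in
theorem stmt_8 (L J : ℕ) (hL : 0 < L) (hJ : 0 < J) (x : Fin J → ℝ)
    (hx : ∀ j, 1 / (L : ℝ) ≤ distNearestInt (x j)) :
    (J : ℝ) / 6 < ∑ l ∈ Finset.Icc 1 L, ‖∑ j, e ((l : ℝ) * x j)‖ := by
  -- rule out L = 1
  rcases Nat.lt_or_ge L 2 with hL2 | hL2
  · exfalso
    have hL1 : L = 1 := by omega
    have h1 := hx ⟨0, hJ⟩
    have h2 := abs_sub_round (x ⟨0, hJ⟩)
    rw [hL1] at h1
    unfold distNearestInt at h1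
    norm_num at h1
    linarith
  -- main case : L ≥ 2
  have hJpos : (0 : ℝ) < J := by exact_mod_cast hJ
  have hLR : (2 : ℝ) ≤ (L : ℝ) := by exact_mod_cast hL2
  have hπ := Real.pi_pos
  set ϑ : ℝ := Real.pi / ((L : ℝ) + 1) with hϑdef
  have hϑpos : 0 < ϑ := by rw [hϑdef]; positivity
  have hϑ3 : ϑ ≤ Real.pi / 3 := by
    rw [hϑdef]
    apply div_le_div_of_nonneg_left hπ.le (by norm_num)
    linarith
  have hϑhalf : ϑ ≤ Real.pi / 2 := le_trans hϑ3 (by linarith)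
  have hϑltpi : ϑ < Real.pi := lt_of_le_of_lt hϑ3 (by linarith)
  have hsinϑpos : 0 < Real.sin ϑ := Real.sin_pos_of_pos_of_lt_pi hϑpos hϑltpi
  have hcosϑ : 1 / 2 ≤ Real.cos ϑ := by
    have h := Real.cos_le_cos_of_nonneg_of_le_pi hϑpos.le (by linarith) hϑ3
    rw [Real.cos_pi_div_three] at h
    exact h
  set γ : ℝ := Real.cos ϑ - Real.cos (2 * Real.pi / (L : ℝ)) with hγdef
  have hγ : Real.sin ϑ ^ 2 ≤ γ := by
    have h2ϑ : Real.cos (2 * Real.pi / (L : ℝ)) ≤ Real.cos (2 * ϑ) := by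
      apply Real.cos_le_cos_of_nonneg_of_le_pi
      · positivity
      · rw [div_le_iff₀ (by linarith : (0:ℝ) < (L:ℝ))]; nlinarith
      · rw [hϑdef, show (2:ℝ) * (Real.pi / ((L:ℝ) + 1)) = 2 * Real.pi / ((L:ℝ) + 1) by ring]
        apply div_le_div_of_nonneg_left (by positivity) (by linarith) (by linarith)
    have hc2 := Real.cos_two_mul ϑ
    have hs2 := Real.sin_sq_add_cos_sq ϑ
    have hc1 := Real.cos_le_one ϑ
    rw [hγdef]
    nlinarith [mul_nonneg (by linarith : (0:ℝ) ≤ Real.cos ϑ) (by linarith : (0:ℝ) ≤ 1 - Real.cos ϑ)]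
  have hγpos : 0 < γ := lt_of_lt_of_le (by positivity) hγ
  have hJor : 2 / ((L : ℝ) + 1) ≤ Real.sin ϑ := by
    have h := Real.mul_le_sin hϑpos.le hϑhalf
    have h2 : 2 / Real.pi * ϑ = 2 / ((L : ℝ) + 1) := by
      rw [hϑdef]; field_simp
    linarith [h2 ▸ h]
  have hkey : Real.sin ϑ < γ * ((L : ℝ) + 3) := by
    have h1 : 1 < Real.sin ϑ * ((L : ℝ) + 3) := by
      have hL1 : (0:ℝ) < (L:ℝ) + 1 := by linarith
      rw [div_le_iff₀ hL1] at hJor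
      nlinarith [hsinϑpos]
    nlinarith [mul_le_mul_of_nonneg_right hγ (by linarith : (0:ℝ) ≤ (L:ℝ) + 3)]

  -- ## Setup of notation
  set S : ℝ → ℂ := fun t => ∑ j, e (t * x j) with hSdef
  set Sig : ℝ := ∑ l ∈ Finset.Icc 1 L, ‖S (l : ℝ)‖ with hSigdef
  show (J : ℝ) / 6 < Sig
  have hS0 : S 0 = (J : ℂ) := by
    simp only [hSdef]
    simp [e_zero]
  have hSneg : ∀ t : ℝ, ‖S (-t)‖ = ‖S t‖ := by
    intro t
    have h : S (-t) = (starRingEnd ℂ) (S t) := by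
      simp only [hSdef, map_sum]
      refine Finset.sum_congr rfl fun j _ => ?_
      rw [e_conj, neg_mul]
    rw [h, RCLike.norm_conj]
  have hSignn : 0 ≤ Sig := by
    rw [hSigdef]; exact Finset.sum_nonneg fun l _ => norm_nonneg _
  have hSigrange : Sig = ∑ k ∈ range L, ‖S (((k + 1 : ℕ) : ℝ))‖ := by
    rw [hSigdef, ← Finset.Ico_add_one_right_eq_Icc, Finset.sum_Ico_eq_sum_range, Nat.add_sub_cancel]
    exact Finset.sum_congr rfl fun i _ => by rw [Nat.add_comm]
  have hϑL1 : ((L : ℝ) + 1) * ϑ = Real.pi := by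
    rw [hϑdef]; field_simp
  set b : ℕ → ℝ := fun k => Real.sin (((k : ℝ) + 1) * ϑ) with hbdef
  have hb0 : ∀ k, k < L → 0 ≤ b k := by
    intro k hk
    simp only [hbdef]
    apply Real.sin_nonneg_of_nonneg_of_le_pi
    · positivity
    · have hkL : (k : ℝ) + 1 ≤ (L : ℝ) + 1 := by
        have : (k : ℝ) < (L : ℝ) := by exact_mod_cast hk
        linarith
      calc ((k : ℝ) + 1) * ϑ ≤ ((L : ℝ) + 1) * ϑ := mul_le_mul_of_nonneg_right hkL hϑpos.le
        _ = Real.pi := hϑL1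
  have hb1 : ∀ k, b k ≤ 1 := fun k => Real.sin_le_one _
  set B : Fin J → ℂ := fun j => ∑ k ∈ range L, ((b k : ℝ) : ℂ) * e (x j) ^ k with hBdef
  -- ## the closed identity at n = L
  have hsinL1 : Real.sin (((L : ℝ) + 1) * ϑ) = 0 := by
    rw [hϑL1, Real.sin_pi]
  have hsinLϑ : Real.sin ((L : ℝ) * ϑ) = Real.sin ϑ := by
    have h : (L : ℝ) * ϑ = Real.pi - ϑ := by linarith [hϑL1]
    rw [h, Real.sin_pi_sub]
  have hID : ∀ j, (2 * (Real.cos ϑ : ℂ) * e (x j) - e (x j) ^ 2 - 1) * B j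
      = -(Real.sin ϑ : ℂ) * (1 + e (x j) ^ (L + 1)) := by
    intro j
    have h := key_ident ϑ (e (x j)) L
    rw [hsinL1, hsinLϑ] at h
    simp only [hBdef, hbdef]
    rw [h]
    push_cast
    ring
  -- ## the per-j identity
  have hPER : ∀ j, ((2 * Real.cos ϑ - 2 * Real.cos (2 * Real.pi * x j) : ℝ) : ℂ)
        * (B j * (starRingEnd ℂ) (B j))
      = -(Real.sin ϑ : ℂ) * ((1 + e (x j) ^ (L + 1))
          * ((starRingEnd ℂ) (e (x j)) * (starRingEnd ℂ) (B j))) := by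
    intro j
    have h1 := hID j
    have h2 := e_mul_conj (x j)
    have h3 := e_add_conj (x j)
    simp only [Complex.ofReal_sub, Complex.ofReal_mul, Complex.ofReal_ofNat] at h3 ⊢
    linear_combination ((starRingEnd ℂ) (e (x j)) * (starRingEnd ℂ) (B j)) * h1
      + (B j * (starRingEnd ℂ) (B j)) * h3
      + (B j * (starRingEnd ℂ) (B j) * (e (x j) - 2 * (Real.cos ϑ : ℂ))) * h2
  -- ## cosine bound from the separation hypothesis
  have hcos : ∀ j, Real.cos (2 * Real.pi * x j) ≤ Real.cos (2 * Real.pi / (L : ℝ)) := by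
    intro j
    have h1 : distNearestInt (x j) ≤ 1 / 2 := abs_sub_round (x j)
    have h2 := hx j
    have h3 : Real.cos (2 * Real.pi * x j)
        = Real.cos (2 * Real.pi * (x j - ((round (x j) : ℤ) : ℝ))) := by
      rw [show 2 * Real.pi * x j
          = 2 * Real.pi * (x j - ((round (x j) : ℤ) : ℝ)) + ((round (x j) : ℤ) : ℝ) * (2 * Real.pi)
          by push_cast; ring]
      rw [Real.cos_add_int_mul_two_pi]
    have h4 : Real.cos (2 * Real.pi * (x j - ((round (x j) : ℤ) : ℝ)))
        = Real.cos (2 * Real.pi * distNearestInt (x j)) := by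
      rw [← Real.cos_abs (2 * Real.pi * (x j - ((round (x j) : ℤ) : ℝ))), abs_mul,
        abs_of_pos (by positivity : (0 : ℝ) < 2 * Real.pi)]
      rfl
    rw [h3, h4]
    apply Real.cos_le_cos_of_nonneg_of_le_pi
    · positivity
    · nlinarith
    · rw [div_le_iff₀ (by linarith : (0 : ℝ) < (L : ℝ))] at h2
      rw [div_le_iff₀ (by linarith : (0 : ℝ) < (L : ℝ))]
      nlinarith
  -- ## the W sum
  set W : ℂ := ∑ k ∈ range L, ((b k : ℝ) : ℂ)
      * (S (-((k : ℝ) + 1)) + S ((L : ℝ) - (k : ℝ))) with hWdef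
  clear_value ϑ γ S Sig b B W
  have hWeq : ∑ j, ((1 + e (x j) ^ (L + 1))
      * ((starRingEnd ℂ) (e (x j)) * (starRingEnd ℂ) (B j))) = W := by
    have hterm : ∀ (j : Fin J) (k : ℕ),
        (1 + e (x j) ^ (L + 1)) * ((starRingEnd ℂ) (e (x j)) * (starRingEnd ℂ) (e (x j) ^ k))
        = e (-((k : ℝ) + 1) * x j) + e (((L : ℝ) - (k : ℝ)) * x j) := by
      intro j k
      have hc1 : (starRingEnd ℂ) (e (x j)) * (starRingEnd ℂ) (e (x j) ^ k)
          = e (-((k : ℝ) + 1) * x j) := by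
        rw [e_pow, e_conj, e_conj, ← e_add]
        congr 1; ring
      have hc2 : e (x j) ^ (L + 1) * e (-((k : ℝ) + 1) * x j) = e (((L : ℝ) - (k : ℝ)) * x j) := by
        rw [e_pow, ← e_add]
        congr 1; push_cast; ring
      calc (1 + e (x j) ^ (L + 1)) * ((starRingEnd ℂ) (e (x j)) * (starRingEnd ℂ) (e (x j) ^ k))
          = (1 + e (x j) ^ (L + 1)) * e (-((k : ℝ) + 1) * x j) := by rw [hc1]
        _ = e (-((k : ℝ) + 1) * x j) + e (x j) ^ (L + 1) * e (-((k : ℝ) + 1) * x j) := by ring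
        _ = _ := by rw [hc2]
    calc ∑ j, ((1 + e (x j) ^ (L + 1)) * ((starRingEnd ℂ) (e (x j)) * (starRingEnd ℂ) (B j)))
        = ∑ j, ∑ k ∈ range L, ((b k : ℝ) : ℂ)
            * (e (-((k : ℝ) + 1) * x j) + e (((L : ℝ) - (k : ℝ)) * x j)) := by
          refine Finset.sum_congr rfl fun j _ => ?_
          simp only [hBdef, map_sum, map_mul, Complex.conj_ofReal]
          rw [Finset.mul_sum, Finset.mul_sum]
          refine Finset.sum_congr rfl fun k hk => ?_
          rw [← hterm j k]
          ring
      _ = W := by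
          rw [hWdef, Finset.sum_comm]
          refine Finset.sum_congr rfl fun k _ => ?_
          simp only [hSdef]
          rw [← Finset.sum_add_distrib, Finset.mul_sum]
  -- ## bound on W
  have hrefl : ∑ k ∈ range L, ‖S (((L - k : ℕ) : ℝ))‖ = ∑ k ∈ range L, ‖S (((k + 1 : ℕ) : ℝ))‖ := by
    rw [← Finset.sum_range_reflect (fun k => ‖S (((L - k : ℕ) : ℝ))‖) L]
    refine Finset.sum_congr rfl fun i hi => ?_
    have hi' := Finset.mem_range.mp hi
    have h3 : L - (L - 1 - i) = i + 1 := by omega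
    rw [h3]
  have hWbound : ‖W‖ ≤ 2 * Sig := by
    rw [hWdef]
    have step1 : ‖∑ k ∈ range L, ((b k : ℝ) : ℂ)
        * (S (-((k : ℝ) + 1)) + S ((L : ℝ) - (k : ℝ)))‖
        ≤ ∑ k ∈ range L, (‖S (((k + 1 : ℕ) : ℝ))‖ + ‖S (((L - k : ℕ) : ℝ))‖) := by
      refine le_trans (norm_sum_le _ _) (Finset.sum_le_sum fun k hk => ?_)
      have hk' := Finset.mem_range.mp hk
      rw [norm_mul, Complex.norm_real, Real.norm_eq_abs]
      have h4 : ‖S (-((k : ℝ) + 1)) + S ((L : ℝ) - (k : ℝ))‖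
          ≤ ‖S (((k + 1 : ℕ) : ℝ))‖ + ‖S (((L - k : ℕ) : ℝ))‖ := by
        refine le_trans (norm_add_le _ _) ?_
        rw [hSneg ((k : ℝ) + 1)]
        rw [show ((k : ℝ) + 1) = (((k + 1 : ℕ)) : ℝ) by push_cast; ring]
        rw [show ((L : ℝ) - (k : ℝ)) = (((L - k : ℕ)) : ℝ) by
          rw [Nat.cast_sub hk'.le]]
      have h5 : |b k| ≤ 1 := abs_le.mpr ⟨by linarith [hb0 k hk'], hb1 k⟩
      have h6 := norm_nonneg (S (-((k : ℝ) + 1)) + S ((L : ℝ) - (k : ℝ)))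
      calc |b k| * ‖S (-((k : ℝ) + 1)) + S ((L : ℝ) - (k : ℝ))‖
          ≤ 1 * ‖S (-((k : ℝ) + 1)) + S ((L : ℝ) - (k : ℝ))‖ :=
            mul_le_mul_of_nonneg_right h5 h6
        _ = ‖S (-((k : ℝ) + 1)) + S ((L : ℝ) - (k : ℝ))‖ := one_mul _
        _ ≤ _ := h4
    have hsplit2 : ∑ k ∈ range L, (‖S (((k + 1 : ℕ) : ℝ))‖ + ‖S (((L - k : ℕ) : ℝ))‖)
        = Sig + Sig := by
      rw [Finset.sum_add_distrib, hrefl, ← hSigrange]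
    linarith [step1]
  -- ## the summed identity and first main estimate
  set Sig2 : ℝ := ∑ j, Complex.normSq (B j) with hSig2def
  clear_value Sig2
  have hA : ∑ j, ((2 * Real.cos ϑ - 2 * Real.cos (2 * Real.pi * x j)) * Complex.normSq (B j))
      = (-(Real.sin ϑ : ℂ) * W).re := by
    have h1 : ∀ j : Fin J, ((2 * Real.cos ϑ - 2 * Real.cos (2 * Real.pi * x j))
          * Complex.normSq (B j))
        = ((-(Real.sin ϑ : ℂ)) * ((1 + e (x j) ^ (L + 1))
            * ((starRingEnd ℂ) (e (x j)) * (starRingEnd ℂ) (B j)))).re := by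
      intro j
      rw [← hPER j, Complex.mul_conj, ← Complex.ofReal_mul, Complex.ofReal_re]
    calc ∑ j, ((2 * Real.cos ϑ - 2 * Real.cos (2 * Real.pi * x j)) * Complex.normSq (B j))
        = ∑ j, ((-(Real.sin ϑ : ℂ)) * ((1 + e (x j) ^ (L + 1))
            * ((starRingEnd ℂ) (e (x j)) * (starRingEnd ℂ) (B j)))).re :=
          Finset.sum_congr rfl fun j _ => h1 j
      _ = (∑ j, (-(Real.sin ϑ : ℂ)) * ((1 + e (x j) ^ (L + 1))
            * ((starRingEnd ℂ) (e (x j)) * (starRingEnd ℂ) (B j)))).re :=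
          (Complex.re_sum _ _).symm
      _ = (-(Real.sin ϑ : ℂ) * W).re := by rw [← Finset.mul_sum, hWeq]
  have hstep1 : 2 * γ * Sig2 ≤ Real.sin ϑ * (2 * Sig) := by
    have hlow : 2 * γ * Sig2
        ≤ ∑ j, ((2 * Real.cos ϑ - 2 * Real.cos (2 * Real.pi * x j)) * Complex.normSq (B j)) := by
      rw [hSig2def, Finset.mul_sum]
      refine Finset.sum_le_sum fun j _ => ?_
      have h1 := hcos j
      have h2 := Complex.normSq_nonneg (B j)
      rw [hγdef]
      nlinarith
    have hup : (-(Real.sin ϑ : ℂ) * W).re ≤ Real.sin ϑ * (2 * Sig) := by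
      have h1 : (-(Real.sin ϑ : ℂ) * W).re ≤ ‖-(Real.sin ϑ : ℂ) * W‖ := by
        have := Complex.re_le_norm (-(Real.sin ϑ : ℂ) * W)
        exact this
      have h2 : ‖-(Real.sin ϑ : ℂ) * W‖ = Real.sin ϑ * ‖W‖ := by
        rw [norm_mul, norm_neg, Complex.norm_real, Real.norm_eq_abs, abs_of_pos hsinϑpos]
      nlinarith [norm_nonneg W, hWbound]
    linarith [hA ▸ hlow]
  -- ## the double-sum expansion of Sig2
  have hB2 : Sig2 = ∑ k ∈ range L, ∑ k' ∈ range L,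
      (b k * b k') * (S ((k : ℝ) - (k' : ℝ))).re := by
    have h1 : ∀ j : Fin J, (Complex.normSq (B j) : ℝ)
        = ∑ k ∈ range L, ∑ k' ∈ range L,
            (b k * b k') * (e (((k : ℝ) - (k' : ℝ)) * x j)).re := by
      intro j
      have h2 : B j * (starRingEnd ℂ) (B j)
          = ∑ k ∈ range L, ∑ k' ∈ range L,
              ((b k * b k' : ℝ) : ℂ) * e (((k : ℝ) - (k' : ℝ)) * x j) := by
        simp only [hBdef, map_sum, map_mul, Complex.conj_ofReal]
        rw [Finset.sum_mul_sum]
        refine Finset.sum_congr rfl fun k hk => Finset.sum_congr rfl fun k' hk' => ?_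
        have h3 : e (x j) ^ k * (starRingEnd ℂ) (e (x j) ^ k')
            = e (((k : ℝ) - (k' : ℝ)) * x j) := by
          rw [e_pow, e_pow, e_conj, ← e_add]
          congr 1; ring
        calc ((b k : ℝ) : ℂ) * e (x j) ^ k * (((b k' : ℝ) : ℂ) * (starRingEnd ℂ) (e (x j) ^ k'))
            = ((b k * b k' : ℝ) : ℂ) * (e (x j) ^ k * (starRingEnd ℂ) (e (x j) ^ k')) := by
              push_cast; ring
          _ = _ := by rw [h3]
      have h4 : (Complex.normSq (B j) : ℝ) = (B j * (starRingEnd ℂ) (B j)).re := by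
        rw [Complex.mul_conj, Complex.ofReal_re]
      rw [h4, h2, Complex.re_sum]
      refine Finset.sum_congr rfl fun k hk => ?_
      rw [Complex.re_sum]
      exact Finset.sum_congr rfl fun k' hk' => Complex.re_ofReal_mul _ _
    rw [hSig2def, Finset.sum_congr rfl fun j _ => h1 j, Finset.sum_comm]
    refine Finset.sum_congr rfl fun k hk => ?_
    rw [Finset.sum_comm]
    refine Finset.sum_congr rfl fun k' hk' => ?_
    simp only [hSdef]
    rw [Complex.re_sum, Finset.mul_sum]
  -- ## off-diagonal bound
  have herase : ∀ k, k < L →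
      ∑ k' ∈ (range L).erase k, ‖S ((k : ℝ) - (k' : ℝ))‖ ≤ 2 * Sig := by
    intro k hk
    have hsplit : (range L).erase k = range k ∪ Ico (k + 1) L := by
      ext a
      simp only [Finset.mem_erase, Finset.mem_range, Finset.mem_union, Finset.mem_Ico]
      omega
    have hdisj : Disjoint (range k) (Ico (k + 1) L) := by
      rw [Finset.disjoint_left]
      intro a ha ha'
      simp only [Finset.mem_range] at ha
      simp only [Finset.mem_Ico] at ha'
      omega
    rw [hsplit, Finset.sum_union hdisj]
    have hA1 : ∑ k' ∈ range k, ‖S ((k : ℝ) - (k' : ℝ))‖ ≤ Sig := by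
      have h1 : ∀ k' ∈ range k, ‖S ((k : ℝ) - (k' : ℝ))‖ = ‖S (((k - k' : ℕ) : ℝ))‖ := by
        intro k' hk'
        have h2 := Finset.mem_range.mp hk'
        rw [show ((k : ℝ) - (k' : ℝ)) = (((k - k' : ℕ)) : ℝ) by rw [Nat.cast_sub h2.le]]
      rw [Finset.sum_congr rfl h1,
        ← Finset.sum_range_reflect (fun k' => ‖S (((k - k' : ℕ) : ℝ))‖) k]
      have h2 : ∀ i ∈ range k, ‖S (((k - (k - 1 - i) : ℕ) : ℝ))‖ = ‖S (((i + 1 : ℕ) : ℝ))‖ := by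
        intro i hi
        have h3 := Finset.mem_range.mp hi
        have h4 : k - (k - 1 - i) = i + 1 := by omega
        rw [h4]
      rw [Finset.sum_congr rfl h2, hSigrange]
      exact Finset.sum_le_sum_of_subset_of_nonneg (Finset.range_subset_range.mpr hk.le)
        (fun i _ _ => norm_nonneg _)
    have hB1 : ∑ k' ∈ Ico (k + 1) L, ‖S ((k : ℝ) - (k' : ℝ))‖ ≤ Sig := by
      have h1 : ∀ k' ∈ Ico (k + 1) L, ‖S ((k : ℝ) - (k' : ℝ))‖ = ‖S (((k' - k : ℕ) : ℝ))‖ := by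
        intro k' hk'
        have hm := Finset.mem_Ico.mp hk'
        have h2 : ((k : ℝ) - (k' : ℝ)) = -(((k' - k : ℕ)) : ℝ) := by
          rw [Nat.cast_sub (by omega : k ≤ k')]; ring
        rw [h2, hSneg]
      rw [Finset.sum_congr rfl h1, Finset.sum_Ico_eq_sum_range]
      have h2 : ∀ i ∈ range (L - (k + 1)), ‖S (((k + 1 + i - k : ℕ) : ℝ))‖
          = ‖S (((i + 1 : ℕ) : ℝ))‖ := by
        intro i _
        have h3 : k + 1 + i - k = i + 1 := by omega
        rw [h3]
      rw [Finset.sum_congr rfl h2, hSigrange]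
      exact Finset.sum_le_sum_of_subset_of_nonneg (Finset.range_subset_range.mpr (by omega))
        (fun i _ _ => norm_nonneg _)
    linarith
  -- ## diagonal lower bound
  have hdiag : ∀ k ∈ range L,
      b k ^ 2 * (J : ℝ) - 2 * Sig
        ≤ ∑ k' ∈ range L, (b k * b k') * (S ((k : ℝ) - (k' : ℝ))).re := by
    intro k hk
    have hkL := Finset.mem_range.mp hk
    rw [← Finset.add_sum_erase _ _ hk]
    have hd : (b k * b k) * (S ((k : ℝ) - (k : ℝ))).re = b k ^ 2 * (J : ℝ) := by
      rw [sub_self, hS0, Complex.natCast_re]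
      ring
    have hoff : ∀ k' ∈ (range L).erase k,
        -(‖S ((k : ℝ) - (k' : ℝ))‖) ≤ (b k * b k') * (S ((k : ℝ) - (k' : ℝ))).re := by
      intro k' hk'
      have hk'' := Finset.mem_range.mp (Finset.mem_of_mem_erase hk')
      have h5 : |(S ((k : ℝ) - (k' : ℝ))).re| ≤ ‖S ((k : ℝ) - (k' : ℝ))‖ := by
        have := Complex.abs_re_le_norm (S ((k : ℝ) - (k' : ℝ)))
        exact this
      have hbk := hb0 k hkL
      have hbk' := hb0 k' hk''
      have hbk1 := hb1 k
      have hbk'1 := hb1 k'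
      have h6 := abs_le.mp h5
      have hbb0 : 0 ≤ b k * b k' := mul_nonneg hbk hbk'
      have hbb1 : b k * b k' ≤ 1 := by nlinarith
      have hnn := norm_nonneg (S ((k : ℝ) - (k' : ℝ)))
      rcases le_or_gt 0 ((S ((k : ℝ) - (k' : ℝ))).re) with hre | hre
      · nlinarith
      · nlinarith [mul_le_mul_of_nonpos_right hbb1 hre.le]
    have h7 := Finset.sum_le_sum hoff
    rw [Finset.sum_neg_distrib] at h7
    have h8 := herase k hkL
    rw [hd]
    linarith
  -- ## the value of β₀
  have hβ0 : ∑ k ∈ range L, b k ^ 2 = ((L : ℝ) + 1) / 2 := by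
    have hw : Complex.exp (((2 * ϑ : ℝ)) * Complex.I) ≠ 1 := by
      rw [Ne, Complex.exp_eq_one_iff]
      push_neg
      intro n hn
      rw [show (n : ℂ) * (2 * (Real.pi : ℂ) * Complex.I)
          = ((n : ℂ) * (2 * (Real.pi : ℂ))) * Complex.I by ring] at hn
      have h2 := mul_right_cancel₀ Complex.I_ne_zero hn
      have h3 : (2 * ϑ : ℝ) = (n : ℝ) * (2 * Real.pi) := by exact_mod_cast h2
      have hn0 : (0 : ℝ) < (n : ℝ) := by nlinarith
      have hn1 : (n : ℝ) < 1 := by nlinarith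
      have hn0' : (0 : ℤ) < n := by exact_mod_cast hn0
      have hn1' : n < 1 := by exact_mod_cast hn1
      omega
    have hpow : Complex.exp (((2 * ϑ : ℝ)) * Complex.I) ^ (L + 1) = 1 := by
      rw [← Complex.exp_nat_mul]
      have h4 : ((L + 1 : ℕ) : ℂ) * (((2 * ϑ : ℝ)) * Complex.I)
          = 2 * (Real.pi : ℂ) * Complex.I := by
        have h5 : (((L + 1 : ℕ) : ℝ) * (2 * ϑ) : ℝ) = 2 * Real.pi := by
          push_cast
          linarith [hϑL1]
        calc ((L + 1 : ℕ) : ℂ) * (((2 * ϑ : ℝ)) * Complex.I)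
            = ((((L + 1 : ℕ) : ℝ) * (2 * ϑ) : ℝ) : ℂ) * Complex.I := by push_cast; ring
          _ = ((2 * Real.pi : ℝ) : ℂ) * Complex.I := by rw [h5]
          _ = 2 * (Real.pi : ℂ) * Complex.I := by push_cast; ring
      rw [h4, Complex.exp_two_pi_mul_I]
    have hgeom := geom_sum_eq hw (L + 1)
    rw [hpow] at hgeom
    simp only [sub_self, zero_div] at hgeom
    have hre : ∑ i ∈ range (L + 1), Real.cos (2 * (i : ℝ) * ϑ) = 0 := by
      have h5 : ∀ i : ℕ, (Complex.exp (((2 * ϑ : ℝ)) * Complex.I)) ^ i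
          = Complex.exp ((((2 * (i : ℝ) * ϑ) : ℝ)) * Complex.I) := by
        intro i
        rw [← Complex.exp_nat_mul]
        congr 1
        push_cast
        ring
      calc ∑ i ∈ range (L + 1), Real.cos (2 * (i : ℝ) * ϑ)
          = ∑ i ∈ range (L + 1), (Complex.exp ((((2 * (i : ℝ) * ϑ) : ℝ)) * Complex.I)).re := by
            exact Finset.sum_congr rfl fun i _ => (Complex.exp_ofReal_mul_I_re _).symm
        _ = (∑ i ∈ range (L + 1), (Complex.exp (((2 * ϑ : ℝ)) * Complex.I)) ^ i).re := by
            rw [Complex.re_sum]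
            exact (Finset.sum_congr rfl fun i _ => by rw [h5 i]).symm
        _ = 0 := by rw [hgeom, Complex.zero_re]
    have hstrip := Finset.sum_range_succ' (fun i : ℕ => Real.cos (2 * (i : ℝ) * ϑ)) L
    rw [hre] at hstrip
    have hf0 : Real.cos (2 * ((0 : ℕ) : ℝ) * ϑ) = 1 := by norm_num
    have hsum1 : ∑ i ∈ range L, Real.cos (2 * (((i + 1 : ℕ)) : ℝ) * ϑ) = -1 := by
      simp only [hf0] at hstrip
      push_cast at hstrip ⊢
      linarith
    have hbsq : ∀ k : ℕ, b k ^ 2 = 1 / 2 - Real.cos (2 * (((k + 1 : ℕ)) : ℝ) * ϑ) / 2 := by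
      intro k
      have hc := Real.cos_sq (((k : ℝ) + 1) * ϑ)
      have hs := Real.sin_sq_add_cos_sq (((k : ℝ) + 1) * ϑ)
      have harg : 2 * (((k + 1 : ℕ)) : ℝ) * ϑ = 2 * ((((k : ℝ)) + 1) * ϑ) := by push_cast; ring
      simp only [hbdef]
      rw [harg]
      linarith
    rw [Finset.sum_congr rfl fun k _ => hbsq k, Finset.sum_sub_distrib]
    rw [show ∑ k ∈ range L, Real.cos (2 * (((k + 1 : ℕ)) : ℝ) * ϑ) / 2
        = (∑ k ∈ range L, Real.cos (2 * (((k + 1 : ℕ)) : ℝ) * ϑ)) / 2 from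
      (Finset.sum_div _ _ _).symm]
    rw [hsum1, Finset.sum_const, Finset.card_range]
    simp only [nsmul_eq_mul]
    try ring
  -- ## assemble
  have hSig2low : ((L : ℝ) + 1) / 2 * (J : ℝ) - 2 * (L : ℝ) * Sig ≤ Sig2 := by
    rw [hB2]
    have h1 := Finset.sum_le_sum hdiag
    have h2 : ∑ k ∈ range L, (b k ^ 2 * (J : ℝ) - 2 * Sig)
        = ((L : ℝ) + 1) / 2 * (J : ℝ) - (L : ℝ) * (2 * Sig) := by
      rw [Finset.sum_sub_distrib, ← Finset.sum_mul, hβ0, Finset.sum_const, Finset.card_range]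
      simp only [nsmul_eq_mul]
      try ring
    rw [h2] at h1
    have h3 : ((L : ℝ) + 1) / 2 * (J : ℝ) - 2 * (L : ℝ) * Sig
        = ((L : ℝ) + 1) / 2 * (J : ℝ) - (L : ℝ) * (2 * Sig) := by ring
    rw [h3]
    exact h1
  have hfinal : γ * (((L : ℝ) + 1) / 2) * (J : ℝ) ≤ (Real.sin ϑ + 2 * γ * (L : ℝ)) * Sig := by
    nlinarith [hstep1, mul_le_mul_of_nonneg_left hSig2low (by linarith : (0 : ℝ) ≤ 2 * γ)]
  by_contra hcon
  push_neg at hcon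
  have hP : 0 < Real.sin ϑ + 2 * γ * (L : ℝ) := by
    have : (0:ℝ) ≤ (L : ℝ) := by positivity
    nlinarith
  have h6 : Real.sin ϑ + 2 * γ * (L : ℝ) < 6 * (γ * (((L : ℝ) + 1) / 2)) := by
    nlinarith [hkey]
  nlinarith [hfinal, mul_le_mul_of_nonneg_left hcon hP.le,
    mul_lt_mul_of_pos_right h6 (by positivity : (0:ℝ) < (J : ℝ) / 6)]
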